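/- Let G = (S, C, R) be a reaction network and Σ ⊆ S a nonempty subset of species. Then Σ is drainable if and only if it is DG-drainable, and Σ is self-replicable if and only if it is DG-self-replicable. Here, a G-reaction pathway is a sequence y(0), y(1), …, y(k) ∈ ℝ≥0ⁿ such that for each j ∈ {1,…,k} there exist a reaction y_j → y_j' ∈ R and a vector w_j ∈ ℝ≥0ⁿ with y(j−1) = y_j + w_j and y(j) = y_j' + w_j; Σ is DG-drainable (resp. DG-self-replicable) if there is a G-reaction pathway with the i-th coordinate of y(k) − y(0) strictly negative (resp. strictly positive) for every i with S_i ∈ Σ. -/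

import Mathlib

/-- A reaction network: a finite set of species, a finite set of complexes
(nonnegative vectors supported on the species), and a finite set of reactions
(a digraph on the complexes with no self-loops), such that every complex takes
part in some reaction and every species is part of some complex. -/
structure RN (ι : Type) where
  species : Finset ι
  complexes : Finset (ι → ℝ)
  reactions : Finset ((ι → ℝ) × (ι → ℝ))
  complexes_nonneg : ∀ y ∈ complexes, ∀ i, 0 ≤ y i
  complexes_supp : ∀ y ∈ complexes, ∀ i, y i ≠ 0 → i ∈ species
  react_mem_fst : ∀ r ∈ reactions, r.1 ∈ complexes
  react_mem_snd : ∀ r ∈ reactions, r.2 ∈ complexes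
  no_loops : ∀ r ∈ reactions, r.1 ≠ r.2
  complexes_used : ∀ y ∈ complexes, ∃ r ∈ reactions, r.1 = y ∨ r.2 = y
  species_used : ∀ i ∈ species, ∃ y ∈ complexes, y i ≠ 0

namespace RN

variable {ι : Type}

/-- A siphon: a nonempty set of species such that every reaction having a
product species in it also has a reactant species in it. -/
def IsSiphon (G : RN ι) (T : Set ι) : Prop :=
  T.Nonempty ∧ T ⊆ ↑G.species ∧
    ∀ r ∈ G.reactions, (∃ i ∈ T, 0 < r.2 i) → ∃ i ∈ T, 0 < r.1 i

/-- A minimal siphon: a siphon not properly containing any other siphon. -/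
def MinimalSiphon (G : RN ι) (T : Set ι) : Prop :=
  G.IsSiphon T ∧ ∀ T' : Set ι, G.IsSiphon T' → T' ⊆ T → T' = T

/-- A nonempty set of species is drainable if some finite sequence of reactions
(with repetitions allowed) strictly decreases every one of its coordinates. -/
def Drainable (G : RN ι) (T : Set ι) : Prop :=
  T.Nonempty ∧ T ⊆ ↑G.species ∧
    ∃ L : List ((ι → ℝ) × (ι → ℝ)), (∀ r ∈ L, r ∈ G.reactions) ∧
      ∀ i ∈ T, (L.map (fun r => r.2 i - r.1 i)).sum < 0

/-- A nonempty set of species is self-replicable if some finite sequence of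
reactions (with repetitions allowed) strictly increases every one of its
coordinates. -/
def SelfReplicable (G : RN ι) (T : Set ι) : Prop :=
  T.Nonempty ∧ T ⊆ ↑G.species ∧
    ∃ L : List ((ι → ℝ) × (ι → ℝ)), (∀ r ∈ L, r ∈ G.reactions) ∧
      ∀ i ∈ T, 0 < (L.map (fun r => r.2 i - r.1 i)).sum

/-- A P-semiflow: a nonzero nonnegative vector supported on the species with
ωᵀN = 0, i.e. ω · (y' - y) = 0 for every reaction y → y'. -/
def IsPSemiflow (G : RN ι) (ω : ι → ℝ) : Prop :=
  (∀ i, 0 ≤ ω i) ∧ (∀ i, ω i ≠ 0 → i ∈ G.species) ∧ ω ≠ 0 ∧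
    ∀ r ∈ G.reactions, ∑ i ∈ G.species, ω i * (r.2 i - r.1 i) = 0

/-- The siphon/P-semiflow property: every siphon contains the support of a
P-semiflow. -/
def SiphonPSemiflowProperty (G : RN ι) : Prop :=
  ∀ T : Set ι, G.IsSiphon T → ∃ ω : ι → ℝ, G.IsPSemiflow ω ∧ {i | 0 < ω i} ⊆ T

/-- Consistency: there is a strictly positive T-semiflow, i.e. strictly
positive reaction weights v with N v = 0. -/
def Consistent (G : RN ι) : Prop :=
  ∃ v : ((ι → ℝ) × (ι → ℝ)) → ℝ, (∀ r ∈ G.reactions, 0 < v r) ∧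
    ∀ i : ι, ∑ r ∈ G.reactions, v r * (r.2 i - r.1 i) = 0

/-- Conservativity: there is a strictly positive conservation law ω ≫ 0 with
ωᵀN = 0. -/
def Conservative (G : RN ι) : Prop :=
  ∃ ω : ι → ℝ, (∀ i ∈ G.species, 0 < ω i) ∧
    ∀ r ∈ G.reactions, ∑ i ∈ G.species, ω i * (r.2 i - r.1 i) = 0

/-- A directed reaction path from `y` to `y'` all of whose non-endpoint
complexes lie in the set `A`. -/
def PathThrough (G : RN ι) (A : Set (ι → ℝ)) (y y' : ι → ℝ) : Prop :=
  ∃ L : List (ι → ℝ), (∀ z ∈ L, z ∈ A) ∧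
    List.Chain (fun a b => (a, b) ∈ G.reactions) y (L ++ [y'])

end RN

variable {ι : Type}

/-- The complex consisting of the single species `j` (with unit coefficient),
for `j` in the given set. -/
def InterCplx [DecidableEq ι] (Y : Finset ι) (z : ι → ℝ) : Prop :=
  ∃ j ∈ Y, z = Pi.single j 1

/-- The complex `z` is supported off the set `Y`. -/
def OffSet (Y : Finset ι) (z : ι → ℝ) : Prop := ∀ j ∈ Y, z j = 0

namespace RN

/-- `Y` is a set of intermediate species of `G`: (I1) every complex is either
supported off `Y` or equals a single species of `Y` with unit coefficient;
(I2) every `Y`-complex is connected to non-intermediate complexes by directed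
reaction paths, in both directions, all of whose non-endpoints are
intermediates. -/
def IsIntermediateSet [DecidableEq ι] (G : RN ι) (Y : Finset ι) : Prop :=
  Y.Nonempty ∧ Y ⊆ G.species ∧
    (∀ y ∈ G.complexes, OffSet Y y ∨ InterCplx Y y) ∧
    (∀ j ∈ Y, ∃ y ∈ G.complexes, ∃ y' ∈ G.complexes, OffSet Y y ∧ OffSet Y y' ∧
      G.PathThrough {z | InterCplx Y z} y (Pi.single j 1) ∧
      G.PathThrough {z | InterCplx Y z} (Pi.single j 1) y')

/-- `G'` is the reduction of `G` by removal of the set of intermediates `Y`: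
its reactions are exactly the pairs `y → y'` of distinct non-intermediate
complexes of `G` joined by a directed reaction path all of whose non-endpoints
are intermediates (in particular all reactions of `G` between non-intermediate
complexes). -/
def IsIntermediateReduction [DecidableEq ι] (G : RN ι) (Y : Finset ι) (G' : RN ι) : Prop :=
  ∀ p : (ι → ℝ) × (ι → ℝ), p ∈ G'.reactions ↔
    (p.1 ∈ G.complexes ∧ p.2 ∈ G.complexes ∧ OffSet Y p.1 ∧ OffSet Y p.2 ∧
      p.1 ≠ p.2 ∧ G.PathThrough {z | InterCplx Y z} p.1 p.2)

end RN

/-- The projection of a complex onto the coordinates outside `E` (the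
coordinates in `E` are set to zero). -/
def projOff [DecidableEq ι] (E : Finset ι) (y : ι → ℝ) : ι → ℝ :=
  fun i => if i ∈ E then 0 else y i

namespace RN

/-- `E` is a set of catalysts of `G`, with `GE` the subnetwork of `G` implied
by `E`: (C1) every reaction either leaves the `E`-coordinates untouched or is
supported entirely in `E`; `GE` consists of the reactions of `G` involving
only species of `E`; and (C2) `GE` has no drainable and no self-replicable
siphons. -/
def IsCatalystSet (G GE : RN ι) (E : Finset ι) : Prop :=
  E.Nonempty ∧ E ⊆ G.species ∧
    (∀ r ∈ G.reactions, (∀ i ∈ E, r.1 i = r.2 i) ∨ (∀ i, i ∉ E → r.1 i = 0 ∧ r.2 i = 0)) ∧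
    (∀ p : (ι → ℝ) × (ι → ℝ), p ∈ GE.reactions ↔
      (p ∈ G.reactions ∧ (∀ i, p.1 i ≠ 0 → i ∈ E) ∧ (∀ i, p.2 i ≠ 0 → i ∈ E))) ∧
    (∀ T : Set ι, GE.IsSiphon T → ¬ GE.Drainable T ∧ ¬ GE.SelfReplicable T)

/-- `G'` is the reduction of `G` by removal of the set of catalysts `E`: its
reactions are the projections off `E` of those reactions of `G` at least one
of whose projected sides is nonzero. -/
def IsCatalystReduction [DecidableEq ι] (G : RN ι) (E : Finset ι) (G' : RN ι) : Prop :=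
  ∀ p : (ι → ℝ) × (ι → ℝ), p ∈ G'.reactions ↔
    ∃ r ∈ G.reactions, p = (projOff E r.1, projOff E r.2) ∧
      (projOff E r.1 ≠ 0 ∨ projOff E r.2 ≠ 0)

/-- A monomolecular network: every complex is either zero or a single species
with unit coefficient. -/
def Monomolecular [DecidableEq ι] (G : RN ι) : Prop :=
  ∀ y ∈ G.complexes, y = 0 ∨ ∃ i ∈ G.species, y = Pi.single i 1

end RN

/-- A `G`-reaction pathway of length `k`: a sequence `y 0, …, y k` of
nonnegative vectors such that consecutive terms differ by firing one reaction,
i.e. `y j = yⱼ + wⱼ` and `y (j+1) = yⱼ' + wⱼ` for some reaction `yⱼ → yⱼ'` of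
`G` and some nonnegative vector `wⱼ`. -/
def DGPathway {ι : Type} (G : RN ι) (k : ℕ) (y : ℕ → ι → ℝ) : Prop :=
  (∀ j ≤ k, ∀ i, 0 ≤ y j i) ∧
  ∀ j < k, ∃ r ∈ G.reactions, ∃ w : ι → ℝ, (∀ i, 0 ≤ w i) ∧
    y j = r.1 + w ∧ y (j + 1) = r.2 + w

lemma list_sum_map_sub {α : Type*} (L : List α) (f g : α → ℝ) :
    (L.map fun a => f a - g a).sum = (L.map f).sum - (L.map g).sum := by
  induction L with
  | nil => simp
  | cons a l ih => simp [ih]; ring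

/-- From a list of reactions, build a pathway with matching net change. -/
lemma pathway_of_list {ι : Type} (G : RN ι) (L : List ((ι → ℝ) × (ι → ℝ)))
    (hL : ∀ r ∈ L, r ∈ G.reactions) :
    ∃ (k : ℕ) (y : ℕ → ι → ℝ), DGPathway G k y ∧
      ∀ i, y k i - y 0 i = (L.map (fun r => r.2 i - r.1 i)).sum := by
  classical
  refine ⟨L.length, fun j i =>
    ((L.take j).map (fun r => r.2 i)).sum + ((L.drop j).map (fun r => r.1 i)).sum, ⟨?_, ?_⟩, ?_⟩
  · intro j _ i
    have h1 : 0 ≤ ((L.take j).map (fun r => r.2 i)).sum := by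
      apply List.sum_nonneg
      intro x hx
      obtain ⟨r, hr, rfl⟩ := List.mem_map.1 hx
      exact G.complexes_nonneg _ (G.react_mem_snd _ (hL _ (List.mem_of_mem_take hr))) i
    have h2 : 0 ≤ ((L.drop j).map (fun r => r.1 i)).sum := by
      apply List.sum_nonneg
      intro x hx
      obtain ⟨r, hr, rfl⟩ := List.mem_map.1 hx
      exact G.complexes_nonneg _ (G.react_mem_fst _ (hL _ (List.mem_of_mem_drop hr))) i
    exact add_nonneg h1 h2
  · intro j hj
    refine ⟨L.get ⟨j, hj⟩, hL _ (List.get_mem L ⟨j, hj⟩),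
      fun i => ((L.take j).map (fun r => r.2 i)).sum
        + ((L.drop (j + 1)).map (fun r => r.1 i)).sum, ?_, ?_, ?_⟩
    · intro i
      have h1 : 0 ≤ ((L.take j).map (fun r => r.2 i)).sum := by
        apply List.sum_nonneg
        intro x hx
        obtain ⟨r, hr, rfl⟩ := List.mem_map.1 hx
        exact G.complexes_nonneg _ (G.react_mem_snd _ (hL _ (List.mem_of_mem_take hr))) i
      have h2 : 0 ≤ ((L.drop (j + 1)).map (fun r => r.1 i)).sum := by
        apply List.sum_nonneg
        intro x hx
        obtain ⟨r, hr, rfl⟩ := List.mem_map.1 hx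
        exact G.complexes_nonneg _ (G.react_mem_fst _ (hL _ (List.mem_of_mem_drop hr))) i
      exact add_nonneg h1 h2
    · funext i
      have hdrop : L.drop j = L.get ⟨j, hj⟩ :: L.drop (j + 1) :=
        List.drop_eq_getElem_cons hj
      simp only [hdrop, List.map_cons, List.sum_cons, Pi.add_apply]
      ring
    · funext i
      have htake : L.take (j + 1) = L.take j ++ [L.get ⟨j, hj⟩] := by
        rw [List.take_succ]
        simp [List.getElem?_eq_getElem hj]
      simp only [htake, List.map_append, List.sum_append, List.map_cons, List.map_nil,
        List.sum_cons, List.sum_nil, Pi.add_apply]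
      ring
  · intro i
    simp [list_sum_map_sub]

/-- From a pathway, extract a list of reactions with matching net change. -/
lemma list_of_pathway {ι : Type} (G : RN ι) (k : ℕ) (y : ℕ → ι → ℝ)
    (h : DGPathway G k y) :
    ∃ L : List ((ι → ℝ) × (ι → ℝ)), (∀ r ∈ L, r ∈ G.reactions) ∧
      ∀ i, (L.map (fun r => r.2 i - r.1 i)).sum = y k i - y 0 i := by
  classical
  obtain ⟨-, hstep⟩ := h
  choose! r hrmem w hwnn heq1 heq2 using hstep
  refine ⟨List.ofFn (fun j : Fin k => r j), ?_, ?_⟩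
  · intro p hp
    obtain ⟨j, rfl⟩ := List.mem_ofFn.1 hp
    exact hrmem j j.isLt
  · intro i
    have hmap : (List.ofFn (fun j : Fin k => r j)).map (fun p => p.2 i - p.1 i)
        = List.ofFn (fun j : Fin k => (r j).2 i - (r j).1 i) := by
      rw [List.map_ofFn]; rfl
    rw [hmap, List.sum_ofFn]
    have hterm : ∀ j : Fin k, (r j).2 i - (r j).1 i = y (j + 1) i - y j i := by
      intro j
      have h1 := congrFun (heq1 j j.isLt) i
      have h2 := congrFun (heq2 j j.isLt) i
      simp only [Pi.add_apply] at h1 h2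
      linarith
    calc ∑ j : Fin k, ((r j).2 i - (r j).1 i)
        = ∑ j : Fin k, (y (j + 1) i - y j i) := by
          exact Finset.sum_congr rfl (fun j _ => hterm j)
      _ = ∑ j ∈ Finset.range k, (y (j + 1) i - y j i) := by
          exact Fin.sum_univ_eq_sum_range (fun j => y (j + 1) i - y j i) k
      _ = y k i - y 0 i := Finset.sum_range_sub (fun j => y j i) k

/-- Proposition 7: a nonempty set of species `Σ` is drainable (respectively,
self-replicable) if and only if it is DG-drainable (respectively,
DG-self-replicable): some `G`-reaction pathway strictly decreases
(respectively, increases) every coordinate of `Σ`. -/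
theorem drainable_selfReplicable_iff_DG {ι : Type} (G : RN ι)
    (T : Set ι) (hT : T.Nonempty) (hTS : T ⊆ ↑G.species) :
    (G.Drainable T ↔
      ∃ (k : ℕ) (y : ℕ → ι → ℝ), DGPathway G k y ∧ ∀ i ∈ T, y k i - y 0 i < 0) ∧
    (G.SelfReplicable T ↔
      ∃ (k : ℕ) (y : ℕ → ι → ℝ), DGPathway G k y ∧ ∀ i ∈ T, 0 < y k i - y 0 i) := by
  constructor
  · constructor
    · rintro ⟨-, -, L, hLmem, hLsum⟩
      obtain ⟨k, y, hpath, hdiff⟩ := pathway_of_list G L hLmem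
      exact ⟨k, y, hpath, fun i hi => by rw [hdiff i]; exact hLsum i hi⟩
    · rintro ⟨k, y, hpath, hdiff⟩
      obtain ⟨L, hLmem, hLsum⟩ := list_of_pathway G k y hpath
      exact ⟨hT, hTS, L, hLmem, fun i hi => by rw [hLsum i]; exact hdiff i hi⟩
  · constructor
    · rintro ⟨-, -, L, hLmem, hLsum⟩
      obtain ⟨k, y, hpath, hdiff⟩ := pathway_of_list G L hLmem
      exact ⟨k, y, hpath, fun i hi => by rw [hdiff i]; exact hLsum i hi⟩
    · rintro ⟨k, y, hpath, hdiff⟩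
      obtain ⟨L, hLmem, hLsum⟩ := list_of_pathway G k y hpath
      exact ⟨hT, hTS, L, hLmem, fun i hi => by rw [hLsum i]; exact hdiff i hi⟩
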